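/- Let α ∈ (π, 2π) and let G = A_α = {z ∈ ℝ² \ {0} : the angle between the vector z and the positive x-axis e₁ is less than α/2}. Then for every x ∈ G and every r ∈ (0, 1/2], the metric ball B_s(x,r) = {y ∈ G : s_G(x,y) < r} is a convex subset of ℝ². -/

import Mathlib

/-- The triangular ratio metric `s_G(x,y) = sup_{z ∈ ∂G} |x−y|/(|z−x|+|z−y|)`. -/
noncomputable def sMetric {n : ℕ} (G : Set (EuclideanSpace ℝ (Fin n)))
    (x y : EuclideanSpace ℝ (Fin n)) : ℝ :=
  ⨆ z ∈ frontier G, dist x y / (dist z x + dist z y)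

/-- The metric ball `B_s(x,r) = {y ∈ G : s_G(x,y) < r}`. -/
def sBall {n : ℕ} (G : Set (EuclideanSpace ℝ (Fin n))) (x : EuclideanSpace ℝ (Fin n))
    (r : ℝ) : Set (EuclideanSpace ℝ (Fin n)) :=
  {y ∈ G | sMetric G x y < r}

open Set Filter RealInnerProductSpace

section ConvexSlice
variable {E : Type*} [NormedAddCommGroup E] [InnerProductSpace ℝ E]

set_option maxHeartbeats 2000000 in
/-- The set `{y : dist x y < r (dist z x + dist z y)}` is convex when `0 < r ≤ 1/2`. -/
lemma convex_slice (x z : E) {r : ℝ} (hr0 : 0 < r) (hr2 : r ≤ 1/2) :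
    Convex ℝ {y : E | dist x y < r * (dist z x + dist z y)} := by
  have key : ∀ y : E, (dist x y < r * (dist z x + dist z y)) ↔
      ‖(x - z) - (y - z)‖ < r * (‖x - z‖ + ‖y - z‖) := by
    intro y
    rw [sub_sub_sub_cancel_right, dist_eq_norm x y, dist_eq_norm z x, dist_eq_norm z y,
      norm_sub_rev z x, norm_sub_rev z y]
  intro y₁ h₁ y₂ h₂ t u ht hu htu
  rcases eq_or_lt_of_le ht with rfl | ht'
  · simp only [zero_add] at htu; subst htu; simpa using h₂
  rcases eq_or_lt_of_le hu with rfl | hu'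
  · simp only [add_zero] at htu; subst htu; simpa using h₁
  simp only [mem_setOf_eq, key] at h₁ h₂ ⊢
  have hw : (t • y₁ + u • y₂) - z = t • (y₁ - z) + u • (y₂ - z) := by
    calc t • y₁ + u • y₂ - z = t • y₁ + u • y₂ - (t+u) • z := by rw [htu, one_smul]
    _ = t • (y₁ - z) + u • (y₂ - z) := by rw [add_smul, smul_sub, smul_sub]; abel
  rw [hw]
  have huu : u = 1 - t := by linarith
  subst huu
  set a := x - z with ha
  set w₁ := y₁ - z with hw₁def
  set w₂ := y₂ - z with hw₂def
  clear_value a w₁ w₂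
  have hr1 : r < 1 := by linarith
  have h1r2 : (0:ℝ) < 1 - r^2 := by nlinarith
  set A := ‖a‖ with hA
  set s₁ := ‖w₁‖ with hs₁
  set s₂ := ‖w₂‖ with hs₂
  set s := ‖t • w₁ + (1-t) • w₂‖ with hs
  clear_value A s₁ s₂ s
  rcases eq_or_lt_of_le ((hA ▸ norm_nonneg a : (0:ℝ) ≤ A)) with hA0 | hApos
  · -- A = 0 : hypotheses are contradictory
    exfalso
    have ha0 : a = 0 := by rw [← norm_eq_zero, ← hA, ← hA0]
    rw [ha0, zero_sub, norm_neg, ← hs₁, ← hA0] at h₁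
    have hs1n : (0:ℝ) ≤ s₁ := hs₁ ▸ norm_nonneg w₁
    nlinarith
  -- squared hypotheses
  have P₁ : A^2 - 2*⟪a, w₁⟫ + s₁^2 < (r*(A+s₁))^2 := by
    have hsq := pow_lt_pow_left₀ h₁ (norm_nonneg _) (two_ne_zero)
    rw [norm_sub_sq_real, ← hA, ← hs₁] at hsq
    linarith
  have P₂ : A^2 - 2*⟪a, w₂⟫ + s₂^2 < (r*(A+s₂))^2 := by
    have hsq := pow_lt_pow_left₀ h₂ (norm_nonneg _) (two_ne_zero)
    rw [norm_sub_sq_real, ← hA, ← hs₂] at hsq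
    linarith
  have K₁ : 2*(1-r^2)*⟪a, w₁⟫ > (1-2*r^2)*A^2 := by
    nlinarith [mul_lt_mul_of_pos_left P₁ h1r2, sq_nonneg ((1-r^2)*s₁ - r^2*A)]
  have K₂ : 2*(1-r^2)*⟪a, w₂⟫ > (1-2*r^2)*A^2 := by
    nlinarith [mul_lt_mul_of_pos_left P₂ h1r2, sq_nonneg ((1-r^2)*s₂ - r^2*A)]
  have ipw : ⟪a, t • w₁ + (1-t) • w₂⟫ = t*⟪a, w₁⟫ + (1-t)*⟪a, w₂⟫ := by
    rw [inner_add_right, real_inner_smul_right, real_inner_smul_right]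
  have Kw : 2*(1-r^2)*(t*⟪a, w₁⟫ + (1-t)*⟪a, w₂⟫) > (1-2*r^2)*A^2 := by
    have e1 := mul_lt_mul_of_pos_left K₁ ht'
    have e2 := mul_lt_mul_of_pos_left K₂ hu'
    have e3 : (1-2*r^2)*A^2 = t*((1-2*r^2)*A^2) + (1-t)*((1-2*r^2)*A^2) := by
      rw [← add_mul, htu, one_mul]
    rw [e3]; nlinarith [e1, e2]
  have CS : t*⟪a, w₁⟫ + (1-t)*⟪a, w₂⟫ ≤ A * s := by
    rw [← ipw, hA, hs]; exact real_inner_le_norm a _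
  have h4r : 4*r^2 ≤ 1 := by nlinarith
  have hsnn : (0:ℝ) ≤ s := hs ▸ norm_nonneg _
  have hK : (1-r^2)*s ≥ r^2*A := by
    nlinarith [Kw, CS, mul_pos hApos hApos]
  have hsσ : s ≤ t*s₁ + (1-t)*s₂ := by
    rw [hs, hs₁, hs₂]
    calc ‖t • w₁ + (1-t) • w₂‖ ≤ ‖t • w₁‖ + ‖(1-t) • w₂‖ := norm_add_le _ _
    _ = t*‖w₁‖ + (1-t)*‖w₂‖ := by
        rw [norm_smul, norm_smul, Real.norm_eq_abs, Real.norm_eq_abs,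
          abs_of_pos ht', abs_of_pos hu']
  have h2nd : 0 ≤ (1-r^2)*((t*s₁+(1-t)*s₂) + s) - 2*(r^2*A) := by
    nlinarith [mul_nonneg h1r2.le (sub_nonneg.2 hsσ)]
  have hmono := mul_nonneg (sub_nonneg.2 hsσ) h2nd
  have FS : A^2 - 2*(t*⟪a, w₁⟫ + (1-t)*⟪a, w₂⟫) + s^2 < (r*(A+s))^2 := by
    have e1 := mul_lt_mul_of_pos_left P₁ ht'
    have e2 := mul_lt_mul_of_pos_left P₂ hu'
    have hTσ : t*s₁^2+(1-t)*s₂^2 = (t*s₁+(1-t)*s₂)^2 + (t*(1-t))*(s₁-s₂)^2 := by ring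
    have htu2 : 0 ≤ (1-r^2) * ((t*(1-t))*(s₁-s₂)^2) :=
      mul_nonneg h1r2.le (mul_nonneg (mul_nonneg ht hu) (sq_nonneg _))
    nlinarith [e1, e2, hmono, hTσ, htu2]
  have hsq : ‖a - (t • w₁ + (1-t) • w₂)‖^2 < (r*(A+s))^2 := by
    rw [norm_sub_sq_real, ← hA, ← hs, ipw]; linarith
  have hRpos : (0:ℝ) ≤ r*(A+s) := by positivity
  exact lt_of_pow_lt_pow_left₀ 2 hRpos hsq

end ConvexSlice


section SBallEq

variable {n : ℕ}

/-- For an open domain with nonempty frontier and `0 < r < 1`, the `s`-ball is the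
intersection of the elementary regions determined by the boundary points. -/
lemma sBall_eq {G : Set (EuclideanSpace ℝ (Fin n))} (hG : IsOpen G)
    {x : EuclideanSpace ℝ (Fin n)} (hx : x ∈ G) (hfr : (frontier G).Nonempty)
    {r : ℝ} (hr0 : 0 < r) (hr1 : r < 1) :
    sBall G x r = ⋂ z ∈ frontier G, {y | dist x y < r * (dist z x + dist z y)} := by
  have hGfr : ∀ z ∈ frontier G, z ∉ G := fun z hz hzG =>
    (disjoint_frontier_iff_isOpen.2 hG).ne_of_mem hz hzG rfl
  ext y
  simp only [sBall, Set.mem_setOf_eq, Set.mem_sep_iff, Set.mem_iInter]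
  constructor
  · rintro ⟨hyG, hys⟩ z hz
    have hzx : 0 < dist z x := dist_pos.2 fun h => hGfr z hz (h ▸ hx)
    have hden : 0 < dist z x + dist z y := add_pos_of_pos_of_nonneg hzx dist_nonneg
    have hbdd : BddAbove (Set.range fun z : EuclideanSpace ℝ (Fin n) =>
        ⨆ _ : z ∈ frontier G, dist x y / (dist z x + dist z y)) := by
      refine ⟨1, ?_⟩
      rintro _ ⟨w, rfl⟩
      dsimp only
      by_cases hw : w ∈ frontier G
      · rw [ciSup_pos hw]
        refine div_le_one_of_le₀ ?_ (by positivity)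
        calc dist x y ≤ dist x w + dist w y := dist_triangle _ _ _
        _ = dist w x + dist w y := by rw [dist_comm x w]
      · haveI : IsEmpty (w ∈ frontier G) := ⟨hw⟩
        rw [Real.iSup_of_isEmpty]
        exact zero_le_one
    have h1 : dist x y / (dist z x + dist z y) ≤ sMetric G x y := by
      calc dist x y / (dist z x + dist z y)
          = ⨆ _ : z ∈ frontier G, dist x y / (dist z x + dist z y) := (ciSup_pos (p := z ∈ frontier G)
            (f := fun _ => dist x y / (dist z x + dist z y)) hz).symm
      _ ≤ sMetric G x y := le_ciSup hbdd z
    have h2 : dist x y / (dist z x + dist z y) < r := lt_of_le_of_lt h1 hys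
    exact (div_lt_iff₀ hden).1 h2
  · intro h
    have hyG : y ∈ G := by
      by_contra hyG
      have hseg : (segment ℝ x y ∩ frontier G).Nonempty := by
        by_contra hempty
        rw [Set.not_nonempty_iff_eq_empty] at hempty
        have hsub : segment ℝ x y ⊆ G ∪ (closure G)ᶜ := by
          intro p hp
          by_cases hpG : p ∈ G
          · exact Or.inl hpG
          · refine Or.inr fun hpc => ?_
            have hpfr : p ∈ frontier G := ⟨hpc, by rwa [hG.interior_eq]⟩
            exact (Set.eq_empty_iff_forall_notMem.1 hempty p) ⟨hp, hpfr⟩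
        have hsubG := (convex_segment x y).isPreconnected.subset_left_of_subset_union
          hG isClosed_closure.isOpen_compl
          (disjoint_compl_right.mono_left subset_closure) hsub
          ⟨x, left_mem_segment ℝ x y, hx⟩
        exact hyG (hsubG (right_mem_segment ℝ x y))
      obtain ⟨z, hzseg, hzfr⟩ := hseg
      have hdd : dist x z + dist z y = dist x y := dist_add_dist_of_mem_segment hzseg
      have hlt := h z hzfr
      rw [dist_comm z x, hdd] at hlt
      nlinarith [dist_nonneg (x := x) (y := y)]
    refine ⟨hyG, ?_⟩
    by_cases hxy : x = y
    · subst hxy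
      simp only [sMetric, dist_self, zero_div, Real.iSup_const_zero]
      exact hr0
    · have hcont : Continuous (fun z : EuclideanSpace ℝ (Fin n) => dist z x + dist z y) :=
        (continuous_id.dist continuous_const).add (continuous_id.dist continuous_const)
      have htend : Tendsto (fun z : EuclideanSpace ℝ (Fin n) => dist z x + dist z y)
          (cocompact _) atTop := by
        apply tendsto_atTop_mono (fun z => le_add_of_nonneg_right dist_nonneg)
        exact tendsto_dist_right_cocompact_atTop x
      obtain ⟨z₀, hz₀⟩ := hfr
      obtain ⟨zs, hzs, hmin⟩ := hcont.continuousOn.exists_isMinOn' isClosed_frontier hz₀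
        ((htend.eventually (eventually_ge_atTop (dist z₀ x + dist z₀ y))).filter_mono
          inf_le_left)
      have hzsx : 0 < dist zs x := dist_pos.2 fun hzx => hGfr zs hzs (hzx ▸ hx)
      have hden : 0 < dist zs x + dist zs y := add_pos_of_pos_of_nonneg hzsx dist_nonneg
      have hub : sMetric G x y ≤ dist x y / (dist zs x + dist zs y) := by
        refine Real.iSup_le (fun z => ?_) (by positivity)
        refine Real.iSup_le (fun hz => ?_) (by positivity)
        exact div_le_div_of_nonneg_left dist_nonneg hden (hmin hz)
      exact lt_of_le_of_lt hub ((div_lt_iff₀ hden).2 (h zs hzs))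

end SBallEq

/-- Let α ∈ (π, 2π) and let G = A_α = {z ∈ ℝ² \ {0} : ∠(z,0,e₁) < α/2}. Then for every
x ∈ G and every r ∈ (0, 1/2], the metric ball B_s(x,r) is a convex subset of ℝ². -/
theorem sBall_wide_sector_convex (α : ℝ) (hα : α ∈ Set.Ioo Real.pi (2 * Real.pi))
    (x : EuclideanSpace ℝ (Fin 2))
    (hx : x ∈ {z : EuclideanSpace ℝ (Fin 2) | z ≠ 0 ∧
      EuclideanGeometry.angle z 0 (EuclideanSpace.single 0 1) < α / 2})
    (r : ℝ) (hr : r ∈ Set.Ioc (0:ℝ) (1/2)) :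
    Convex ℝ (sBall {z : EuclideanSpace ℝ (Fin 2) | z ≠ 0 ∧
      EuclideanGeometry.angle z 0 (EuclideanSpace.single 0 1) < α / 2} x r) := by
  set e₁ : EuclideanSpace ℝ (Fin 2) := EuclideanSpace.single 0 1 with he₁def
  set G : Set (EuclideanSpace ℝ (Fin 2)) :=
    {z | z ≠ 0 ∧ EuclideanGeometry.angle z 0 e₁ < α / 2} with hGdef
  have he₁ : e₁ ≠ 0 := by
    intro h
    have h0 : e₁ 0 = 1 := by simp [he₁def]
    rw [h] at h0
    simp at h0
  have hGopen : IsOpen G := by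
    rw [isOpen_iff_mem_nhds]
    rintro z ⟨hz0, hzang⟩
    have hcont : ContinuousAt (fun w : EuclideanSpace ℝ (Fin 2) =>
        EuclideanGeometry.angle w 0 e₁) z := by
      have h := EuclideanGeometry.continuousAt_angle
        (x := (z, (0 : EuclideanSpace ℝ (Fin 2)), e₁)) hz0 he₁
      have hf : Continuous (fun w : EuclideanSpace ℝ (Fin 2) => (w, ((0 : EuclideanSpace ℝ (Fin 2)), e₁))) :=
        continuous_id.prodMk continuous_const
      have hcomp : ContinuousAt ((fun y : EuclideanSpace ℝ (Fin 2) × EuclideanSpace ℝ (Fin 2) × EuclideanSpace ℝ (Fin 2) =>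
          EuclideanGeometry.angle y.1 y.2.1 y.2.2) ∘
          (fun w : EuclideanSpace ℝ (Fin 2) => (w, ((0 : EuclideanSpace ℝ (Fin 2)), e₁)))) z :=
        ContinuousAt.comp h hf.continuousAt
      exact hcomp
    have h1 : {w : EuclideanSpace ℝ (Fin 2) | w ≠ 0} ∈ nhds z :=
      isOpen_compl_singleton.mem_nhds hz0
    have h2 : (fun w : EuclideanSpace ℝ (Fin 2) => EuclideanGeometry.angle w 0 e₁) ⁻¹'
        (Set.Iio (α/2)) ∈ nhds z := hcont.preimage_mem_nhds (Iio_mem_nhds hzang)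
    filter_upwards [h1, h2] with w hw1 hw2
    exact ⟨hw1, hw2⟩
  have hx0 : x ≠ 0 := hx.1
  have hfr0 : (0 : EuclideanSpace ℝ (Fin 2)) ∈ frontier G := by
    rw [hGopen.frontier_eq]
    refine ⟨?_, fun hmem => hmem.1 rfl⟩
    have htend : Tendsto (fun m : ℕ => ((1:ℝ)/(m+1)) • x) atTop
        (nhds (0 : EuclideanSpace ℝ (Fin 2))) := by
      have h := (tendsto_one_div_add_atTop_nhds_zero_nat (𝕜 := ℝ)).smul_const x
      rwa [zero_smul] at h
    refine mem_closure_of_tendsto htend ?_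
    filter_upwards with m
    have hpos : (0:ℝ) < 1/(m+1) := by positivity
    refine ⟨smul_ne_zero hpos.ne' hx0, ?_⟩
    have hang : EuclideanGeometry.angle (((1:ℝ)/(m+1)) • x) 0 e₁
        = EuclideanGeometry.angle x 0 e₁ := by
      simp only [EuclideanGeometry.angle, vsub_eq_sub, sub_zero]
      exact InnerProductGeometry.angle_smul_left_of_pos x e₁ hpos
    rw [hang]
    exact hx.2
  rw [sBall_eq hGopen hx ⟨0, hfr0⟩ hr.1 (lt_of_le_of_lt hr.2 (by norm_num))]
  exact convex_iInter₂ fun z _ => convex_slice x z hr.1 hr.2
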